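/- Massart's finite class lemma: let A ⊆ ℝ^n be a finite set with sup_{a∈A} ‖a‖_2 ≤ r, and let ξ_1,…,ξ_n be i.i.d. Rademacher variables. Then E[max_{a∈A} (1/n) Σ_{i=1}^n ξ_i a_i] ≤ (r/n) √(2 log |A|). -/

import Mathlib

open MeasureTheory ProbabilityTheory

lemma rad_integrable (g : ℝ → ℝ) (a : ℝ) : Integrable g ((1/2 : ENNReal) • Measure.dirac a) := by
  have h : g =ᵐ[Measure.dirac a] fun _ => g a := by
    rw [Filter.EventuallyEq, ae_dirac_eq]
    exact Filter.eventually_pure.mpr rfl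
  exact ((integrable_const (g a)).congr h.symm).smul_measure (by norm_num)

lemma rad_integral (g : ℝ → ℝ) :
    ∫ x, g x ∂((1/2 : ENNReal) • Measure.dirac (1:ℝ) + (1/2 : ENNReal) • Measure.dirac (-1:ℝ))
      = (g 1 + g (-1)) / 2 := by
  rw [integral_add_measure (rad_integrable g 1) (rad_integrable g (-1)),
    integral_smul_measure, integral_smul_measure, integral_dirac, integral_dirac]
  norm_num
  ring

lemma rad_ae_pm {Ω : Type*} [MeasurableSpace Ω] (P : Measure Ω) (X : Ω → ℝ)
    (hX : Measurable X)
    (h : Measure.map X P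
      = (1/2 : ENNReal) • Measure.dirac (1 : ℝ) + (1/2 : ENNReal) • Measure.dirac (-1 : ℝ)) :
    ∀ᵐ ω ∂P, X ω = 1 ∨ X ω = -1 := by
  have hS : MeasurableSet ({1, -1} : Set ℝ) :=
    (Set.Finite.insert _ (Set.finite_singleton _)).measurableSet
  have h0 : P (X ⁻¹' ({1, -1} : Set ℝ)ᶜ) = 0 := by
    rw [← Measure.map_apply hX hS.compl, h]
    simp [Measure.dirac_apply' _ hS.compl]
  rw [ae_iff]
  convert h0 using 2
  ext ω; simp

set_option maxHeartbeats 1000000 in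
/-- Massart's finite class lemma: for a finite set `A ⊆ ℝ^n` with `‖a‖₂ ≤ r` for all
`a ∈ A`, and i.i.d. Rademacher variables `ξ_1, …, ξ_n`,
`E[max_{a ∈ A} (1/n) Σ_i ξ_i a_i] ≤ (r/n) √(2 log |A|)`. -/
theorem massart_finite_class {Ω : Type*} [MeasurableSpace Ω]
    (P : Measure Ω) [IsProbabilityMeasure P]
    (n : ℕ) (hn : 0 < n) (ξ : Fin n → Ω → ℝ)
    (hmeas : ∀ i, Measurable (ξ i))
    (hlaw : ∀ i, Measure.map (ξ i) P
      = (1/2 : ENNReal) • Measure.dirac (1 : ℝ) + (1/2 : ENNReal) • Measure.dirac (-1 : ℝ))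
    (hindep : iIndepFun ξ P)
    (A : Finset (Fin n → ℝ)) (hA : A.Nonempty)
    (r : ℝ) (hr : ∀ a ∈ A, Real.sqrt (∑ i, (a i) ^ 2) ≤ r) :
    ∫ ω, (⨆ a : A, (n : ℝ)⁻¹ * ∑ i, ξ i ω * (a : Fin n → ℝ) i) ∂P
      ≤ r / n * Real.sqrt (2 * Real.log A.card) := by
  classical
  haveI hne : Nonempty {x // x ∈ A} := Finset.nonempty_coe_sort.mpr hA
  have hnR : (0:ℝ) < n := by exact_mod_cast hn
  have hrnn : 0 ≤ r := (Real.sqrt_nonneg _).trans (hr _ hA.choose_spec)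
  have hae : ∀ᵐ ω ∂P, ∀ i, ξ i ω = 1 ∨ ξ i ω = -1 :=
    ae_all_iff.mpr fun i => rad_ae_pm P (ξ i) (hmeas i) (hlaw i)
  set f : {x // x ∈ A} → Ω → ℝ := fun a ω => ∑ i, ξ i ω * (a : Fin n → ℝ) i with hf
  set M : Ω → ℝ := fun ω => ⨆ a : A, f a ω with hMdef
  have hMeasf : ∀ a, Measurable (f a) := fun a =>
    Finset.measurable_sum _ (fun i _ => (hmeas i).mul_const _)
  have hMeasM : Measurable M := Measurable.iSup fun a => hMeasf a
  set K : ℝ := A.sup' hA (fun a => ∑ i, |a i|) with hK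
  have hfB : ∀ᵐ ω ∂P, ∀ a : A, |f a ω| ≤ K := by
    filter_upwards [hae] with ω hω a
    calc |f a ω| ≤ ∑ i, |ξ i ω * (a : Fin n → ℝ) i| := Finset.abs_sum_le_sum_abs _ _
      _ ≤ ∑ i, |(a : Fin n → ℝ) i| := by
          refine Finset.sum_le_sum fun i _ => ?_
          rw [abs_mul]
          rcases hω i with h | h <;> simp [h]
      _ ≤ K := Finset.le_sup' (fun v : Fin n → ℝ => ∑ i, |v i|) a.2
  have hMB : ∀ᵐ ω ∂P, |M ω| ≤ K := by
    filter_upwards [hfB] with ω hω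
    rw [abs_le]
    refine ⟨?_, ciSup_le fun a => (abs_le.mp (hω a)).2⟩
    obtain ⟨a⟩ := hne
    exact (neg_le_of_abs_le (hω a)).trans
      (le_ciSup (f := fun a : {x // x ∈ A} => f a ω) (Set.finite_range _).bddAbove a)
  have hIntM : Integrable M P := by
    refine Integrable.mono' (integrable_const K) hMeasM.aestronglyMeasurable ?_
    filter_upwards [hMB] with ω hω
    simpa [Real.norm_eq_abs] using hω
  -- rewrite the goal integrand
  have hre : ∀ ω, (⨆ a : A, (n : ℝ)⁻¹ * ∑ i, ξ i ω * (a : Fin n → ℝ) i)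
      = (n : ℝ)⁻¹ * M ω := fun ω =>
    (Real.mul_iSup_of_nonneg (by positivity) _).symm
  have hLHS : ∫ ω, (⨆ a : A, (n : ℝ)⁻¹ * ∑ i, ξ i ω * (a : Fin n → ℝ) i) ∂P
      = (n:ℝ)⁻¹ * ∫ ω, M ω ∂P := by
    rw [← integral_const_mul]
    exact integral_congr_ae (ae_of_all _ hre)
  rw [hLHS]
  by_cases hcard : A.card = 1
  · -- singleton case
    obtain ⟨a0, ha0⟩ := Finset.card_eq_one.mp hcard
    have hMc : ∀ ω, M ω = ∑ i, ξ i ω * a0 i := by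
      intro ω
      have : (fun a : A => f a ω) = fun _ => ∑ i, ξ i ω * a0 i := by
        funext a
        have ha : (a : Fin n → ℝ) = a0 := by
          have hx : (a : Fin n → ℝ) ∈ A := a.2
          exact Finset.mem_singleton.mp (by simpa only [ha0] using hx)
        simp [hf, ha]
      rw [hMdef]; simp only [this]; exact ciSup_const
    have hIntxi : ∀ i, Integrable (ξ i) P := by
      intro i
      refine Integrable.mono' (integrable_const 1) (hmeas i).aestronglyMeasurable ?_
      filter_upwards [hae] with ω hω
      rcases hω i with h | h <;> simp [h]
    have hxi0 : ∀ i, ∫ ω, ξ i ω ∂P = 0 := by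
      intro i
      have : ∫ ω, ξ i ω ∂P = ∫ x, x ∂(Measure.map (ξ i) P) :=
        (integral_map (hmeas i).aemeasurable measurable_id.aestronglyMeasurable).symm
      rw [this, hlaw i]
      simpa using rad_integral (fun x => x)
    have hIM : ∫ ω, M ω ∂P = 0 := by
      have : ∫ ω, M ω ∂P = ∑ i, ∫ ω, ξ i ω * a0 i ∂P := by
        rw [integral_congr_ae (ae_of_all _ hMc)]
        exact integral_finset_sum _ fun i _ => (hIntxi i).mul_const _
      rw [this]
      refine Finset.sum_eq_zero fun i _ => ?_
      rw [integral_mul_const, hxi0 i, zero_mul]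
    rw [hIM, mul_zero, hcard]
    simp [Real.log_one]
  · rcases eq_or_lt_of_le hrnn with hr0 | hrpos
    · -- r = 0 : all vectors are zero
      have hz : ∀ a ∈ A, ∀ i, a i = 0 := by
        intro a ha i
        have h1 : Real.sqrt (∑ j, (a j) ^ 2) = 0 :=
          le_antisymm (hr0 ▸ hr a ha) (Real.sqrt_nonneg _)
        have h2 : ∑ j, (a j) ^ 2 = 0 := by
          have := (Real.sqrt_eq_zero (by positivity)).mp h1
          linarith
        have := (Finset.sum_eq_zero_iff_of_nonneg (fun j _ => sq_nonneg (a j))).mp h2 i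
          (Finset.mem_univ i)
        exact pow_eq_zero_iff (by norm_num) |>.mp this
      have hM0 : ∀ ω, M ω = 0 := by
        intro ω
        have : (fun a : A => f a ω) = fun _ => (0:ℝ) := by
          funext a
          simp only [hf]
          exact Finset.sum_eq_zero fun i _ => by rw [hz a a.2 i, mul_zero]
        rw [hMdef]; simp only [this]; exact ciSup_const
      rw [integral_congr_ae (ae_of_all _ hM0)]
      simp
      positivity
    · -- main case : r > 0 and A.card ≥ 2
      have hm1 : (1:ℝ) < A.card := by
        have : 1 < A.card := lt_of_le_of_ne (Finset.card_pos.mpr hA) (Ne.symm hcard)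
        exact_mod_cast this
      set L : ℝ := Real.log A.card with hLdef
      have hL : 0 < L := Real.log_pos hm1
      set s : ℝ := Real.sqrt (2 * L) with hsdef
      have hs2 : s ^ 2 = 2 * L := Real.sq_sqrt (by positivity)
      have hspos : 0 < s := Real.sqrt_pos.mpr (by positivity)
      set t : ℝ := s / r with htdef
      have htpos : 0 < t := div_pos hspos hrpos
      -- integrability of exponentials
      have hIntExp : ∀ a : {x // x ∈ A}, Integrable (fun ω => Real.exp (t * f a ω)) P := by
        intro a
        refine Integrable.mono' (integrable_const (Real.exp (t * K)))
          ((hMeasf a).const_mul t).exp.aestronglyMeasurable ?_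
        filter_upwards [hfB] with ω hω
        rw [Real.norm_eq_abs, abs_of_pos (Real.exp_pos _)]
        exact Real.exp_le_exp.mpr (mul_le_mul_of_nonneg_left (abs_le.mp (hω a)).2 htpos.le)
      have hIntExpM : Integrable (fun ω => Real.exp (t * M ω)) P := by
        refine Integrable.mono' (integrable_const (Real.exp (t * K)))
          (hMeasM.const_mul t).exp.aestronglyMeasurable ?_
        filter_upwards [hMB] with ω hω
        rw [Real.norm_eq_abs, abs_of_pos (Real.exp_pos _)]
        exact Real.exp_le_exp.mpr (mul_le_mul_of_nonneg_left (abs_le.mp hω).2 htpos.le)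
      -- per-vector mgf bound
      have hmgf : ∀ a : {x // x ∈ A},
          ∫ ω, Real.exp (t * f a ω) ∂P ≤ Real.exp (t ^ 2 * r ^ 2 / 2) := by
        intro a
        set X : Fin n → Ω → ℝ := fun i ω => ξ i ω * (a : Fin n → ℝ) i with hX
        have hXmeas : ∀ i, Measurable (X i) := fun i => (hmeas i).mul_const _
        have hXindep : iIndepFun X P :=
          hindep.comp (fun i x => x * (a : Fin n → ℝ) i) (fun i => measurable_mul_const _)
        have hsum : f a = ∑ i, X i := by
          funext ω; simp [hf, hX, Finset.sum_apply]
        have h1 : ∫ ω, Real.exp (t * f a ω) ∂P = mgf (∑ i, X i) P t := by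
          rw [← hsum]; rfl
        rw [h1, hXindep.mgf_sum hXmeas]
        have h2 : ∀ i, mgf (X i) P t = Real.cosh (t * (a : Fin n → ℝ) i) := by
          intro i
          have hco : Continuous fun x : ℝ => Real.exp (t * (x * (a : Fin n → ℝ) i)) :=
            by fun_prop
          have hmap : mgf (X i) P t
              = ∫ x, Real.exp (t * (x * (a : Fin n → ℝ) i)) ∂(Measure.map (ξ i) P) := by
            rw [mgf]
            exact (integral_map (hmeas i).aemeasurable hco.aestronglyMeasurable).symm
          rw [hmap, hlaw i, rad_integral, Real.cosh_eq]
          ring_nf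
        calc ∏ i, mgf (X i) P t
            ≤ ∏ i, Real.exp ((t * (a : Fin n → ℝ) i) ^ 2 / 2) := by
              refine Finset.prod_le_prod (fun i _ => ?_) (fun i _ => ?_)
              · rw [h2]; exact le_of_lt (Real.cosh_pos _)
              · rw [h2]; exact Real.cosh_le_exp_half_sq _
          _ = Real.exp (∑ i, (t * (a : Fin n → ℝ) i) ^ 2 / 2) := by
              rw [Real.exp_sum]
          _ ≤ Real.exp (t ^ 2 * r ^ 2 / 2) := by
              apply Real.exp_le_exp.mpr
              have hsq : ∑ i, ((a : Fin n → ℝ) i) ^ 2 ≤ r ^ 2 := by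
                have h := hr a a.2
                nlinarith [Real.sq_sqrt (show 0 ≤ ∑ i, ((a : Fin n → ℝ) i) ^ 2 by positivity),
                  Real.sqrt_nonneg (∑ i, ((a : Fin n → ℝ) i) ^ 2)]
              have : ∑ i, (t * (a : Fin n → ℝ) i) ^ 2 / 2
                  = t ^ 2 / 2 * ∑ i, ((a : Fin n → ℝ) i) ^ 2 := by
                rw [Finset.mul_sum]
                exact Finset.sum_congr rfl fun i _ => by ring
              rw [this]
              nlinarith
      -- union bound on the exponential of the max
      have hsumbound : ∫ ω, Real.exp (t * M ω) ∂P
          ≤ (A.card : ℝ) * Real.exp (t ^ 2 * r ^ 2 / 2) := by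
        have step1 : ∫ ω, Real.exp (t * M ω) ∂P
            ≤ ∫ ω, ∑ a : {x // x ∈ A}, Real.exp (t * f a ω) ∂P := by
          refine integral_mono hIntExpM (integrable_finset_sum _ fun a _ => hIntExp a) ?_
          intro ω
          obtain ⟨a0, ha0⟩ := Finite.exists_max (fun a : {x // x ∈ A} => f a ω)
          have hMle : M ω ≤ f a0 ω := ciSup_le ha0
          calc Real.exp (t * M ω) ≤ Real.exp (t * f a0 ω) :=
                Real.exp_le_exp.mpr (mul_le_mul_of_nonneg_left hMle htpos.le)
            _ ≤ ∑ a : {x // x ∈ A}, Real.exp (t * f a ω) :=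
                Finset.single_le_sum (f := fun a : {x // x ∈ A} => Real.exp (t * f a ω))
                  (fun a _ => (Real.exp_pos _).le) (Finset.mem_univ a0)
        have step2 : ∫ ω, ∑ a : {x // x ∈ A}, Real.exp (t * f a ω) ∂P
            = ∑ a : {x // x ∈ A}, ∫ ω, Real.exp (t * f a ω) ∂P :=
          integral_finset_sum _ fun a _ => hIntExp a
        calc ∫ ω, Real.exp (t * M ω) ∂P
            ≤ ∑ a : {x // x ∈ A}, ∫ ω, Real.exp (t * f a ω) ∂P := step1.trans_eq step2
          _ ≤ ∑ _a : {x // x ∈ A}, Real.exp (t ^ 2 * r ^ 2 / 2) :=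
              Finset.sum_le_sum fun a _ => hmgf a
          _ = (A.card : ℝ) * Real.exp (t ^ 2 * r ^ 2 / 2) := by
              rw [Finset.sum_const, Finset.card_univ, Fintype.card_coe, nsmul_eq_mul]
      -- Jensen
      have hJ : Real.exp (t * ∫ ω, M ω ∂P) ≤ ∫ ω, Real.exp (t * M ω) ∂P := by
        have := convexOn_exp.map_integral_le (μ := P) (f := fun ω => t * M ω)
          Real.continuous_exp.continuousOn isClosed_univ
          (ae_of_all _ fun ω => Set.mem_univ _) (hIntM.const_mul t)
          (by exact hIntExpM)
        rw [integral_const_mul] at this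
        simpa [Function.comp] using this
      have hkey : t * ∫ ω, M ω ∂P ≤ L + t ^ 2 * r ^ 2 / 2 := by
        have hcardexp : (A.card : ℝ) = Real.exp L := (Real.exp_log (by positivity)).symm
        have : Real.exp (t * ∫ ω, M ω ∂P) ≤ Real.exp (L + t ^ 2 * r ^ 2 / 2) := by
          rw [Real.exp_add, ← hcardexp]
          exact hJ.trans hsumbound
        exact Real.exp_le_exp.mp this
      have hIMle : ∫ ω, M ω ∂P ≤ r * s := by
        have ht2 : t ^ 2 * r ^ 2 = s ^ 2 := by
          rw [htdef]; field_simp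
        have heq : L + t ^ 2 * r ^ 2 / 2 = t * (r * s) := by
          rw [ht2, hs2, htdef, show s / r * (r * s) = s ^ 2 by field_simp, hs2]; ring
        rw [heq] at hkey
        exact le_of_mul_le_mul_left hkey htpos
      calc (n:ℝ)⁻¹ * ∫ ω, M ω ∂P ≤ (n:ℝ)⁻¹ * (r * s) := by
            exact mul_le_mul_of_nonneg_left hIMle (by positivity)
        _ = r / n * s := by ring
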